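/- arXiv:2401.07225 — 5 statements merged into one kernel-verified Lean document; each statement's English description precedes it below -/
import Mathlib

section
/- Let n ≥ 3 be an integer and let μ_L, μ_V, D, x be positive real numbers. Set a := (2/μ_V)·((n−1)/n)²·D² and c := (2/(μ_L·μ_V))·((n−1)/n)·D². Then there exists a real number R > 0 satisfying x + a·R² ≤ μ_L·R^(2(n−1)/n) if and only if c^(n−1)·x ≤ μ_L/n. -/
/-- The stability inequality `x + a R² ≤ μ_L R^(2(n-1)/n)` admits a positive solution `R`
if and only if the smallness condition `c^(n-1) x ≤ μ_L / n` holds, where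
`a = (2/μV)((n-1)/n)² D²` and `c = (2/(μL μV))((n-1)/n) D²`. -/
theorem stability_condition_iff
    (n : ℕ) (hn : 3 ≤ n) (μL μV D x : ℝ)
    (hμL : 0 < μL) (hμV : 0 < μV) (hD : 0 < D) (hx : 0 < x)
    (a c : ℝ)
    (ha : a = (2 / μV) * (((n : ℝ) - 1) / n) ^ 2 * D ^ 2)
    (hc : c = (2 / (μL * μV)) * (((n : ℝ) - 1) / n) * D ^ 2) :
    (∃ R : ℝ, 0 < R ∧ x + a * R ^ 2 ≤ μL * R ^ ((2 * ((n : ℝ) - 1)) / n)) ↔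
      c ^ (n - 1) * x ≤ μL / n := by
  have hnp : 0 < n := by omega
  have hN : (0:ℝ) < n := by exact_mod_cast hnp
  have hN1 : (1:ℝ) < (n:ℝ) := by exact_mod_cast (by omega : 1 < n)
  have hNm1 : (0:ℝ) < (n:ℝ) - 1 := by linarith
  have hcpos : 0 < c := by
    rw [hc]; positivity
  have hacc : a = μL * (((n:ℝ)-1)/n) * c := by
    rw [ha, hc]; field_simp
  have hcast : ((n - 1 : ℕ) : ℝ) = (n:ℝ) - 1 := by
    have h1 : (1:ℕ) ≤ n := by omega
    push_cast [h1]; ring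
  have hcinv : ((c ^ (n-1) : ℝ))⁻¹ = c ^ (-(((n:ℝ)-1))) := by
    rw [← Real.rpow_natCast c (n-1), ← Real.rpow_neg hcpos.le, hcast]
  have hcp : (0:ℝ) < c ^ (n-1) := pow_pos hcpos _
  set p : ℝ := ((n:ℝ)-1)/n with hp
  set q : ℝ := 1/(n:ℝ) with hq
  have hpq : p + q = 1 := by rw [hp, hq]; field_simp; ring
  have hp0 : 0 ≤ p := div_nonneg hNm1.le hN.le
  have hq0 : 0 ≤ q := by positivity
  constructor
  · rintro ⟨R, hR, hineq⟩
    have key := Real.geom_mean_le_arith_mean2_weighted hp0 hq0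
      (mul_nonneg hcpos.le (sq_nonneg R)) (inv_nonneg.mpr hcp.le) hpq
    have hLHS : (c * R ^ 2) ^ p * (((c ^ (n-1) : ℝ))⁻¹) ^ q
        = R ^ ((2 * ((n : ℝ) - 1)) / n) := by
      rw [hcinv, ← Real.rpow_natCast R 2,
        Real.mul_rpow hcpos.le (Real.rpow_nonneg hR.le _),
        ← Real.rpow_mul hR.le, ← Real.rpow_mul hcpos.le]
      have h1 : p + -((n:ℝ)-1) * q = 0 := by
        rw [hp, hq]; field_simp; ring
      have h2 : ((2:ℕ):ℝ) * p = (2 * ((n : ℝ) - 1)) / n := by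
        rw [hp]; push_cast; ring
      rw [mul_comm (c ^ p), mul_assoc, ← Real.rpow_add hcpos, h1, Real.rpow_zero,
        mul_one, h2]
    have h1 : μL * R ^ ((2 * ((n : ℝ) - 1)) / n)
        ≤ a * R ^ 2 + (μL / n) * ((c ^ (n-1) : ℝ))⁻¹ := by
      calc μL * R ^ ((2 * ((n : ℝ) - 1)) / n)
          = μL * ((c * R ^ 2) ^ p * (((c ^ (n-1) : ℝ))⁻¹) ^ q) := by rw [hLHS]
        _ ≤ μL * (p * (c * R ^ 2) + q * ((c ^ (n-1) : ℝ))⁻¹) :=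
            mul_le_mul_of_nonneg_left key hμL.le
        _ = a * R ^ 2 + (μL / n) * ((c ^ (n-1) : ℝ))⁻¹ := by
            rw [hacc, hp, hq]; ring
    have h2 : x ≤ (μL / n) * ((c ^ (n-1) : ℝ))⁻¹ := by linarith
    calc c ^ (n-1) * x ≤ c ^ (n-1) * ((μL / n) * ((c ^ (n-1) : ℝ))⁻¹) :=
          mul_le_mul_of_nonneg_left h2 hcp.le
      _ = μL / n := by field_simp
  · intro hsmall
    refine ⟨c ^ (-(n:ℝ)/2), Real.rpow_pos_of_pos hcpos _, ?_⟩
    have hR2 : (c ^ (-(n:ℝ)/2)) ^ 2 = c ^ (-(n:ℝ)) := by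
      rw [← Real.rpow_natCast (c ^ (-(n:ℝ)/2)) 2, ← Real.rpow_mul hcpos.le]
      norm_num
    have hRα : (c ^ (-(n:ℝ)/2)) ^ ((2 * ((n : ℝ) - 1)) / n) = c ^ (-(((n:ℝ)-1))) := by
      rw [← Real.rpow_mul hcpos.le]
      congr 1
      field_simp
    rw [hR2, hRα]
    have hx2 : x ≤ (μL / n) * c ^ (-(((n:ℝ)-1))) := by
      rw [← hcinv]
      calc x = ((c ^ (n-1) : ℝ))⁻¹ * (c ^ (n-1) * x) := by field_simp
        _ ≤ ((c ^ (n-1) : ℝ))⁻¹ * (μL / n) :=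
            mul_le_mul_of_nonneg_left hsmall (inv_nonneg.mpr hcp.le)
        _ = (μL / n) * ((c ^ (n-1) : ℝ))⁻¹ := by ring
    have haC : a * c ^ (-(n:ℝ)) = μL * (((n:ℝ)-1)/n) * c ^ (-(((n:ℝ)-1))) := by
      rw [hacc]
      have : c * c ^ (-(n:ℝ)) = c ^ (-(((n:ℝ)-1))) := by
        nth_rewrite 1 [← Real.rpow_one c]
        rw [← Real.rpow_add hcpos]
        congr 1; ring
      rw [mul_assoc, this]
    have hE : (0:ℝ) < c ^ (-(((n:ℝ)-1))) := Real.rpow_pos_of_pos hcpos _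
    have hsum : (μL / n) * c ^ (-(((n:ℝ)-1))) + μL * (((n:ℝ)-1)/n) * c ^ (-(((n:ℝ)-1)))
        = μL * c ^ (-(((n:ℝ)-1))) := by field_simp; ring
    linarith [haC, hsum, hx2]
end

section
/- Let n ≥ 3 be an integer and set N := 2n/(n−2). Let A₁ ≥ A₂ > 0 be real numbers and define f : (0, 1] → ℝ by f(t) = (1−t)^(N+1)·(A₁² − A₂²·t^(−(N+1))). Set t* := (A₂/A₁)^(2/(N+2)) (so 0 < t* ≤ 1). Then f is monotone nondecreasing on (0, t*] and monotone nonincreasing on [t*, 1]. -/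
open Set

/-- For `N = 2n/(n-2)` and `A₁ ≥ A₂ > 0`, the function
`f(t) = (1-t)^(N+1) (A₁² − A₂² t^(−(N+1)))` is nondecreasing on `(0, t*]` and
nonincreasing on `[t*, 1]`, where `t* = (A₂/A₁)^(2/(N+2))`. -/
theorem lichnerowicz_f_monotone
    (n : ℕ) (hn : 3 ≤ n) (N : ℝ) (hN : N = 2 * (n : ℝ) / ((n : ℝ) - 2))
    (A₁ A₂ : ℝ) (hA₂ : 0 < A₂) (hA : A₂ ≤ A₁)
    (f : ℝ → ℝ)
    (hf : ∀ t : ℝ, f t = (1 - t) ^ (N + 1) * (A₁ ^ 2 - A₂ ^ 2 * t ^ (-(N + 1))))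
    (tstar : ℝ) (htstar : tstar = (A₂ / A₁) ^ (2 / (N + 2))) :
    MonotoneOn f (Ioc 0 tstar) ∧ AntitoneOn f (Icc tstar 1) := by
  have hfe : f = fun t : ℝ => (1 - t) ^ (N + 1) * (A₁ ^ 2 - A₂ ^ 2 * t ^ (-(N + 1))) :=
    funext hf
  subst hfe
  set g : ℝ → ℝ := fun t : ℝ => (1 - t) ^ (N + 1) * (A₁ ^ 2 - A₂ ^ 2 * t ^ (-(N + 1))) with hg
  have hA₁ : 0 < A₁ := lt_of_lt_of_le hA₂ hA
  have hn3 : (3 : ℝ) ≤ (n : ℝ) := by exact_mod_cast hn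
  have hn2 : (0 : ℝ) < (n : ℝ) - 2 := by linarith
  have hNpos : 0 < N := by
    rw [hN]; positivity
  have hN2 : (0 : ℝ) < N + 2 := by linarith
  have hratio_pos : 0 < A₂ / A₁ := div_pos hA₂ hA₁
  have hratio_le : A₂ / A₁ ≤ 1 := (div_le_one hA₁).mpr hA
  have htpos : 0 < tstar := by
    rw [htstar]; exact Real.rpow_pos_of_pos hratio_pos _
  have htle : tstar ≤ 1 := by
    rw [htstar]
    exact Real.rpow_le_one hratio_pos.le hratio_le (by positivity)
  -- key value at tstar
  have hts : A₂ ^ 2 * tstar ^ (-(N + 2)) = A₁ ^ 2 := by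
    rw [htstar, ← Real.rpow_mul hratio_pos.le,
      show 2 / (N + 2) * (-(N + 2)) = ((-2 : ℤ) : ℝ) by push_cast; field_simp,
      Real.rpow_intCast]
    field_simp
  -- derivative in raw form
  have hD : ∀ t : ℝ, 0 < t →
      HasDerivAt g
        ((N + 1) * (1 - t) ^ N * (-1) * (A₁ ^ 2 - A₂ ^ 2 * t ^ (-(N + 1))) +
          (1 - t) ^ (N + 1) * (-(A₂ ^ 2 * (-(N + 1) * t ^ (-(N + 1) - 1))))) t := by
    intro t ht
    have h1 : HasDerivAt (fun t : ℝ => 1 - t) (-1) t := by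
      simpa using (hasDerivAt_id t).const_sub 1
    have h2 : HasDerivAt (fun s : ℝ => s ^ (N + 1)) ((N + 1) * (1 - t) ^ N) (1 - t) := by
      have := Real.hasDerivAt_rpow_const (x := 1 - t) (p := N + 1) (Or.inr (by linarith))
      simpa using this
    have h3 : HasDerivAt (fun t : ℝ => (1 - t) ^ (N + 1)) ((N + 1) * (1 - t) ^ N * (-1)) t :=
      h2.comp t h1
    have h4 : HasDerivAt (fun t : ℝ => t ^ (-(N + 1))) (-(N + 1) * t ^ (-(N + 1) - 1)) t :=
      Real.hasDerivAt_rpow_const (Or.inl ht.ne')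
    exact h3.mul ((h4.const_mul (A₂ ^ 2)).const_sub (A₁ ^ 2))
  -- nice form of derivative for 0 < t < 1
  have hDeq : ∀ t : ℝ, 0 < t → t < 1 →
      ((N + 1) * (1 - t) ^ N * (-1) * (A₁ ^ 2 - A₂ ^ 2 * t ^ (-(N + 1))) +
          (1 - t) ^ (N + 1) * (-(A₂ ^ 2 * (-(N + 1) * t ^ (-(N + 1) - 1)))))
        = (N + 1) * (1 - t) ^ N * (A₂ ^ 2 * t ^ (-(N + 2)) - A₁ ^ 2) := by
    intro t ht ht1
    have h1t : (1 : ℝ) - t ≠ 0 := by linarith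
    have e1 : (1 - t) ^ (N + 1) = (1 - t) ^ N * (1 - t) := Real.rpow_add_one h1t N
    have e2 : t ^ (-(N + 1)) = t ^ (-(N + 2)) * t := by
      rw [← Real.rpow_add_one ht.ne']; ring_nf
    have e3 : t ^ (-(N + 1) - 1) = t ^ (-(N + 2)) := by ring_nf
    rw [e1, e2, e3]; ring
  have hderiv : ∀ t : ℝ, 0 < t → t < 1 →
      deriv g t = (N + 1) * (1 - t) ^ N * (A₂ ^ 2 * t ^ (-(N + 2)) - A₁ ^ 2) := by
    intro t ht ht1
    rw [(hD t ht).deriv, hDeq t ht ht1]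
  have hdiffOn : ∀ s : Set ℝ, (∀ x ∈ s, 0 < x) → DifferentiableOn ℝ g s := by
    intro s hs x hx
    exact ((hD x (hs x hx)).differentiableAt).differentiableWithinAt
  have hcontOn : ∀ s : Set ℝ, (∀ x ∈ s, 0 < x) → ContinuousOn g s := fun s hs =>
    (hdiffOn s hs).continuousOn
  constructor
  · apply monotoneOn_of_deriv_nonneg (convex_Ioc 0 tstar)
      (hcontOn _ fun x hx => hx.1)
    · rw [interior_Ioc]
      exact hdiffOn _ fun x hx => hx.1
    · rw [interior_Ioc]
      intro x hx
      have hx1 : x < 1 := lt_of_lt_of_le hx.2 htle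
      rw [hderiv x hx.1 hx1]
      have hb : A₁ ^ 2 ≤ A₂ ^ 2 * x ^ (-(N + 2)) := by
        rw [← hts]
        have := Real.rpow_le_rpow_of_nonpos hx.1 hx.2.le (by linarith : -(N + 2) ≤ 0)
        nlinarith [sq_nonneg A₂]
      have h1x : (0:ℝ) ≤ (1 - x) ^ N := Real.rpow_nonneg (by linarith) N
      have := mul_nonneg (mul_nonneg (by linarith : (0:ℝ) ≤ N + 1) h1x)
        (by linarith : (0:ℝ) ≤ A₂ ^ 2 * x ^ (-(N + 2)) - A₁ ^ 2)
      linarith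
  · apply antitoneOn_of_deriv_nonpos (convex_Icc tstar 1)
      (hcontOn _ fun x hx => lt_of_lt_of_le htpos hx.1)
    · rw [interior_Icc]
      exact hdiffOn _ fun x hx => lt_trans htpos hx.1
    · rw [interior_Icc]
      intro x hx
      have hx0 : 0 < x := lt_trans htpos hx.1
      rw [hderiv x hx0 hx.2]
      have hb : A₂ ^ 2 * x ^ (-(N + 2)) ≤ A₁ ^ 2 := by
        rw [← hts]
        have := Real.rpow_le_rpow_of_nonpos htpos hx.1.le (by linarith : -(N + 2) ≤ 0)
        nlinarith [sq_nonneg A₂]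
      have h1x : (0:ℝ) ≤ (1 - x) ^ N := Real.rpow_nonneg (by linarith [hx.2]) N
      have := mul_nonpos_of_nonneg_of_nonpos
        (mul_nonneg (by linarith : (0:ℝ) ≤ N + 1) h1x)
        (by linarith : A₂ ^ 2 * x ^ (-(N + 2)) - A₁ ^ 2 ≤ 0)
      linarith
end

section
/- Let n ≥ 3 be an integer and set N := 2n/(n−2). Let A₁ ≥ A₂ > 0 be real numbers. Then for every t ∈ (0, 1], (1−t)^(N+1)·(A₁² − A₂²·t^(−(N+1))) ≤ (A₁^(2/(N+2)) − A₂^(2/(N+2)))^(N+2). -/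
open Real

lemma lich_key (p : ℝ) (hp : 0 < p) (a b t : ℝ) (hb : 0 < b) (hab : b ≤ a)
    (ht : 0 < t) (ht1 : t < 1) :
    a ^ (p + 1) * (1 - t) ^ p ≤ (a - b) ^ (p + 1) + b ^ (p + 1) * ((1 - t) / t) ^ p := by
  have ha : 0 < a := lt_of_lt_of_le hb hab
  have h1t : 0 < 1 - t := by linarith
  rcases eq_or_lt_of_le hab with rfl | hba
  · -- a = b case
    have hle : (1 - t) ^ p ≤ ((1 - t) / t) ^ p := by
      apply Real.rpow_le_rpow h1t.le _ hp.le
      rw [le_div_iff₀ ht]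
      nlinarith
    have h0 : (b - b) ^ (p + 1) = 0 := by
      simp [Real.zero_rpow (by positivity : p + 1 ≠ 0)]
    rw [h0, zero_add]
    exact mul_le_mul_of_nonneg_left hle (Real.rpow_nonneg hb.le _)
  · obtain ⟨θ, hθdef⟩ : ∃ θ : ℝ, θ = (a - b) / a := ⟨_, rfl⟩
    have hθ : 0 < θ := hθdef ▸ div_pos (by linarith) ha
    have hθ1 : θ < 1 := by rw [hθdef, div_lt_one ha]; linarith
    have hab' : a - b = a * θ := by rw [hθdef]; field_simp
    have hb' : b = a * (1 - θ) := by rw [hθdef]; field_simp; ring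
    obtain ⟨p₁, hp₁def⟩ : ∃ x : ℝ, x = (a - b) ^ (p + 1) / θ := ⟨_, rfl⟩
    obtain ⟨p₂, hp₂def⟩ : ∃ x : ℝ, x = b ^ (p + 1) * ((1 - t) / t) ^ p / (1 - θ) := ⟨_, rfl⟩
    have hp₁pos : 0 < p₁ := by
      rw [hp₁def]
      exact div_pos (Real.rpow_pos_of_pos (by linarith) _) hθ
    have hp₂pos : 0 < p₂ := by
      rw [hp₂def]
      exact div_pos (mul_pos (Real.rpow_pos_of_pos hb _)
        (Real.rpow_pos_of_pos (div_pos h1t ht) _)) (by linarith)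
    have hgm : p₁ ^ θ * p₂ ^ (1 - θ) ≤ θ * p₁ + (1 - θ) * p₂ :=
      Real.geom_mean_le_arith_mean2_weighted hθ.le (by linarith) hp₁pos.le hp₂pos.le (by ring)
    have hq1 : θ * p₁ = (a - b) ^ (p + 1) := by
      rw [hp₁def, mul_comm, div_mul_cancel₀ _ (ne_of_gt hθ)]
    have hq2 : (1 - θ) * p₂ = b ^ (p + 1) * ((1 - t) / t) ^ p := by
      rw [hp₂def, mul_comm, div_mul_cancel₀ _ (by linarith : (1:ℝ) - θ ≠ 0)]
    rw [hq1, hq2] at hgm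
    refine le_trans ?_ hgm
    -- main inequality via logs
    have hL : (0:ℝ) < a ^ (p + 1) * (1 - t) ^ p := by positivity
    have hM : (0:ℝ) < p₁ ^ θ * p₂ ^ (1 - θ) := by positivity
    rw [← Real.log_le_log_iff hL hM]
    rw [Real.log_mul (by positivity) (by positivity),
        Real.log_mul (by positivity) (by positivity),
        Real.log_rpow ha, Real.log_rpow h1t,
        Real.log_rpow hp₁pos, Real.log_rpow hp₂pos,
        hp₁def, hp₂def,
        Real.log_div (ne_of_gt (Real.rpow_pos_of_pos (by linarith : (0:ℝ) < a - b) _))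
          (ne_of_gt hθ),
        Real.log_div (ne_of_gt (mul_pos (Real.rpow_pos_of_pos hb _)
          (Real.rpow_pos_of_pos (div_pos h1t ht) _)))
          (by linarith : (1:ℝ) - θ ≠ 0),
        Real.log_mul (by positivity) (by positivity),
        Real.log_rpow (by linarith : (0:ℝ) < a - b),
        Real.log_rpow hb,
        Real.log_rpow (by positivity : (0:ℝ) < (1 - t) / t),
        Real.log_div (ne_of_gt h1t) (ne_of_gt ht)]
    have e1 : Real.log (a - b) = Real.log a + Real.log θ := by
      rw [hab', Real.log_mul (ne_of_gt ha) (ne_of_gt hθ)]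
    have e2 : Real.log b = Real.log a + Real.log (1 - θ) := by
      rw [hb', Real.log_mul (ne_of_gt ha) (by linarith : (1:ℝ) - θ ≠ 0)]
    rw [e1, e2]
    -- AM-GM core: θ log(1-t) + (1-θ) log t ≤ θ log θ + (1-θ) log (1-θ)
    have h2 : Real.log ((1 - t) / θ) ≤ (1 - t) / θ - 1 :=
      Real.log_le_sub_one_of_pos (div_pos h1t hθ)
    have h3 : Real.log (t / (1 - θ)) ≤ t / (1 - θ) - 1 :=
      Real.log_le_sub_one_of_pos (div_pos ht (by linarith))
    rw [Real.log_div (ne_of_gt h1t) (ne_of_gt hθ)] at h2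
    rw [Real.log_div (ne_of_gt ht) (by linarith : (1:ℝ) - θ ≠ 0)] at h3
    have hcore : θ * Real.log (1 - t) + (1 - θ) * Real.log t ≤
        θ * Real.log θ + (1 - θ) * Real.log (1 - θ) := by
      have k2 : θ * (Real.log (1 - t) - Real.log θ) ≤ θ * ((1 - t) / θ - 1) :=
        mul_le_mul_of_nonneg_left h2 hθ.le
      have k3 : (1 - θ) * (Real.log t - Real.log (1 - θ)) ≤ (1 - θ) * (t / (1 - θ) - 1) :=
        mul_le_mul_of_nonneg_left h3 (by linarith)
      have r2 : θ * ((1 - t) / θ - 1) = (1 - t) - θ := by field_simp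
      have hc : (1 - θ) * (t / (1 - θ)) = t := by
        rw [mul_comm, div_mul_cancel₀ _ (by linarith : (1:ℝ) - θ ≠ 0)]
      have r3 : (1 - θ) * (t / (1 - θ) - 1) = t - (1 - θ) := by
        rw [mul_sub, hc]; ring
      rw [r2] at k2; rw [r3] at k3
      linarith
    nlinarith [mul_le_mul_of_nonneg_left hcore hp.le]

/-- For `N = 2n/(n-2)` and `A₁ ≥ A₂ > 0`, the function
`f(t) = (1-t)^(N+1) (A₁² − A₂² t^(−(N+1)))` is bounded above on `(0,1]` by
`(A₁^(2/(N+2)) − A₂^(2/(N+2)))^(N+2)`. -/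
theorem lichnerowicz_f_upper_bound
    (n : ℕ) (hn : 3 ≤ n) (N : ℝ) (hN : N = 2 * (n : ℝ) / ((n : ℝ) - 2))
    (A₁ A₂ : ℝ) (hA₂ : 0 < A₂) (hA : A₂ ≤ A₁)
    (t : ℝ) (ht : t ∈ Set.Ioc (0 : ℝ) 1) :
    (1 - t) ^ (N + 1) * (A₁ ^ 2 - A₂ ^ 2 * t ^ (-(N + 1))) ≤
      (A₁ ^ (2 / (N + 2)) - A₂ ^ (2 / (N + 2))) ^ (N + 2) := by
  obtain ⟨ht0, ht1⟩ := ht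
  have hn3 : (3:ℝ) ≤ (n:ℝ) := by exact_mod_cast hn
  have hNpos : 0 < N := by rw [hN]; apply div_pos <;> linarith
  have hA₁ : 0 < A₁ := lt_of_lt_of_le hA₂ hA
  have hN2 : N + 2 ≠ 0 := by linarith
  have hexp : (0:ℝ) ≤ 2 / (N + 2) := le_of_lt (div_pos two_pos (by linarith))
  have hb : 0 < A₂ ^ (2 / (N + 2)) := Real.rpow_pos_of_pos hA₂ _
  have hab : A₂ ^ (2 / (N + 2)) ≤ A₁ ^ (2 / (N + 2)) :=
    Real.rpow_le_rpow hA₂.le hA hexp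
  rcases eq_or_lt_of_le ht1 with rfl | ht1'
  · rw [sub_self, Real.zero_rpow (ne_of_gt (by linarith : (0:ℝ) < N + 1)), zero_mul]
    exact Real.rpow_nonneg (by linarith : (0:ℝ) ≤ A₁ ^ (2/(N+2)) - A₂ ^ (2/(N+2))) _
  · have key := lich_key (N + 1) (by linarith) _ _ t hb hab ht0 ht1'
    have hQ : N + 1 + 1 = N + 2 := by ring
    have ea : (A₁ ^ (2 / (N + 2))) ^ (N + 1 + 1) = A₁ ^ 2 := by
      rw [hQ, ← Real.rpow_natCast A₁ 2, ← Real.rpow_mul hA₁.le]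
      congr 1
      push_cast
      field_simp
    have eb : (A₂ ^ (2 / (N + 2))) ^ (N + 1 + 1) = A₂ ^ 2 := by
      rw [hQ, ← Real.rpow_natCast A₂ 2, ← Real.rpow_mul hA₂.le]
      congr 1
      push_cast
      field_simp
    have e3 : ((1 - t) / t) ^ (N + 1) = (1 - t) ^ (N + 1) * t ^ (-(N + 1)) := by
      rw [Real.div_rpow (by linarith : (0:ℝ) ≤ 1 - t) ht0.le, Real.rpow_neg ht0.le,
        div_eq_mul_inv]
    rw [ea, eb, hQ, e3] at key
    nlinarith [key]
end

section
/- Let n ≥ 3 be an integer and set N := 2n/(n−2). Let φ₁, φ₂, A₁, A₂ be positive real numbers. Then (max(φ₁ − φ₂, 0))^(N+1) · (A₁²/φ₁^(N+1) − A₂²/φ₂^(N+1)) ≤ (max(A₁^(2/(N+2)) − A₂^(2/(N+2)), 0))^(N+2). -/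
/-- Two-term weighted AM–GM / Young: `(p+1) u v^p ≤ u^(p+1) + p v^(p+1)`. -/
private lemma lich_young {u v p : ℝ} (hu : 0 ≤ u) (hv : 0 ≤ v) (hp : 0 < p) :
    (p + 1) * (u * v ^ p) ≤ u ^ (p + 1) + p * v ^ (p + 1) := by
  have hp1 : (0:ℝ) < p + 1 := by linarith
  have hconj : (p + 1).HolderConjugate ((p + 1) / p) := by
    constructor
    · rw [inv_div, inv_one]; field_simp; ring
    · linarith
    · positivity
  have h := Real.young_inequality_of_nonneg hu (Real.rpow_nonneg hv p) hconj
  have hvp : (v ^ p) ^ ((p + 1) / p) = v ^ (p + 1) := by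
    rw [← Real.rpow_mul hv]
    congr 1
    field_simp
  rw [hvp] at h
  have h' := mul_le_mul_of_nonneg_left h hp1.le
  calc (p + 1) * (u * v ^ p)
      ≤ (p + 1) * (u ^ (p + 1) / (p + 1) + v ^ (p + 1) / ((p + 1) / p)) := h'
    _ = u ^ (p + 1) + p * v ^ (p + 1) := by field_simp

/-- Tangent-line inequality for the convex function `y^(p+1)/x^p`. -/
private lemma lich_tangent {x y lam p : ℝ} (hx : 0 < x) (hy : 0 ≤ y) (hl : 0 ≤ lam)
    (hp : 0 < p) :
    (p + 1) * (y * lam ^ p) ≤ y ^ (p + 1) / x ^ p + p * (x * lam ^ (p + 1)) := by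
  have h := lich_young hy (mul_nonneg hx.le hl) hp
  rw [Real.mul_rpow hx.le hl, Real.mul_rpow hx.le hl] at h
  have hxp : 0 < x ^ p := Real.rpow_pos_of_pos hx p
  have hx1 : x ^ (p + 1) = x ^ p * x := Real.rpow_add_one hx.ne' p
  have key : (p + 1) * (y * lam ^ p) * x ^ p
      ≤ y ^ (p + 1) + p * (x * lam ^ (p + 1)) * x ^ p := by
    calc (p + 1) * (y * lam ^ p) * x ^ p = (p + 1) * (y * (x ^ p * lam ^ p)) := by ring
      _ ≤ y ^ (p + 1) + p * (x ^ (p + 1) * lam ^ (p + 1)) := h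
      _ = y ^ (p + 1) + p * (x * lam ^ (p + 1)) * x ^ p := by rw [hx1]; ring
  calc (p + 1) * (y * lam ^ p)
      = (p + 1) * (y * lam ^ p) * x ^ p / x ^ p := by field_simp
    _ ≤ (y ^ (p + 1) + p * (x * lam ^ (p + 1)) * x ^ p) / x ^ p :=
        div_le_div_of_nonneg_right key hxp.le |>.trans_eq rfl
    _ = y ^ (p + 1) / x ^ p + p * (x * lam ^ (p + 1)) := by field_simp

/-- Two-term Radon inequality with real exponents. -/
private lemma lich_radon {x1 x2 y1 y2 p : ℝ} (hx1 : 0 < x1) (hx2 : 0 < x2)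
    (hy1 : 0 < y1) (hy2 : 0 < y2) (hp : 0 < p) :
    (y1 + y2) ^ (p + 1) / (x1 + x2) ^ p
      ≤ y1 ^ (p + 1) / x1 ^ p + y2 ^ (p + 1) / x2 ^ p := by
  have hxs : 0 < x1 + x2 := by linarith
  have hys : 0 < y1 + y2 := by linarith
  set lam := (y1 + y2) / (x1 + x2) with hlam
  have hl : 0 ≤ lam := by positivity
  have h1 := lich_tangent hx1 hy1.le hl hp
  have h2 := lich_tangent hx2 hy2.le hl hp
  have hlp : lam ^ p = (y1 + y2) ^ p / (x1 + x2) ^ p := Real.div_rpow hys.le hxs.le p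
  have hlp1 : lam ^ (p + 1) = (y1 + y2) ^ (p + 1) / (x1 + x2) ^ (p + 1) :=
    Real.div_rpow hys.le hxs.le (p + 1)
  have hxsp : (0:ℝ) < (x1 + x2) ^ p := Real.rpow_pos_of_pos hxs p
  have e1 : (y1 + y2) * lam ^ p = (y1 + y2) ^ (p + 1) / (x1 + x2) ^ p := by
    rw [hlp, Real.rpow_add_one hys.ne']
    ring
  have e2 : (x1 + x2) * lam ^ (p + 1) = (y1 + y2) ^ (p + 1) / (x1 + x2) ^ p := by
    rw [hlp1, Real.rpow_add_one hxs.ne']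
    field_simp
  have hsum : (p + 1) * ((y1 + y2) * lam ^ p)
      ≤ (y1 ^ (p + 1) / x1 ^ p + y2 ^ (p + 1) / x2 ^ p)
        + p * ((x1 + x2) * lam ^ (p + 1)) := by nlinarith [h1, h2]
  rw [e1, e2] at hsum
  linarith

/-- Pointwise inequality at the heart of the maximum-principle estimate for the
difference of two Lichnerowicz solutions:
`(max(φ₁ − φ₂, 0))^(N+1) (A₁²/φ₁^(N+1) − A₂²/φ₂^(N+1)) ≤
   (max(A₁^(2/(N+2)) − A₂^(2/(N+2)), 0))^(N+2)`. -/
theorem lichnerowicz_pointwise_estimate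
    (n : ℕ) (hn : 3 ≤ n) (N : ℝ) (hN : N = 2 * (n : ℝ) / ((n : ℝ) - 2))
    (φ₁ φ₂ A₁ A₂ : ℝ) (hφ₁ : 0 < φ₁) (hφ₂ : 0 < φ₂) (hA₁ : 0 < A₁) (hA₂ : 0 < A₂) :
    (max (φ₁ - φ₂) 0) ^ (N + 1) * (A₁ ^ 2 / φ₁ ^ (N + 1) - A₂ ^ 2 / φ₂ ^ (N + 1)) ≤
      (max (A₁ ^ (2 / (N + 2)) - A₂ ^ (2 / (N + 2))) 0) ^ (N + 2) := by
  have hn3 : (3:ℝ) ≤ (n:ℝ) := by exact_mod_cast hn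
  have hNpos : 0 < N := by
    rw [hN]; apply div_pos <;> linarith
  have hN2 : (0:ℝ) < N + 2 := by linarith
  have hN1 : (0:ℝ) < N + 1 := by linarith
  set a := A₁ ^ (2 / (N + 2)) with ha_def
  set b := A₂ ^ (2 / (N + 2)) with hb_def
  have ha : 0 < a := Real.rpow_pos_of_pos hA₁ _
  have hb : 0 < b := Real.rpow_pos_of_pos hA₂ _
  have haA : a ^ (N + 2) = A₁ ^ 2 := by
    rw [ha_def, ← Real.rpow_mul hA₁.le]
    rw [show 2 / (N + 2) * (N + 2) = 2 by field_simp, Real.rpow_two]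
  have hbA : b ^ (N + 2) = A₂ ^ 2 := by
    rw [hb_def, ← Real.rpow_mul hA₂.le]
    rw [show 2 / (N + 2) * (N + 2) = 2 by field_simp, Real.rpow_two]
  rcases le_or_gt φ₁ φ₂ with h | h
  · rw [max_eq_right (by linarith : φ₁ - φ₂ ≤ 0), Real.zero_rpow hN1.ne', zero_mul]
    exact Real.rpow_nonneg (le_max_right _ _) _
  · rw [max_eq_left (by linarith : (0:ℝ) ≤ φ₁ - φ₂)]
    rcases le_or_gt a b with hab | hab
    · rw [max_eq_right (by linarith : a - b ≤ 0), Real.zero_rpow hN2.ne']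
      have hA : A₁ ≤ A₂ := by
        by_contra hc
        push_neg at hc
        exact absurd hab (not_le.mpr (Real.rpow_lt_rpow hA₂.le hc (by positivity)))
      have h1 : A₁ ^ 2 ≤ A₂ ^ 2 := pow_le_pow_left₀ hA₁.le hA 2
      have hφ : φ₂ ^ (N + 1) ≤ φ₁ ^ (N + 1) :=
        Real.rpow_le_rpow hφ₂.le h.le hN1.le
      have h2 : A₁ ^ 2 / φ₁ ^ (N + 1) ≤ A₂ ^ 2 / φ₂ ^ (N + 1) :=
        div_le_div₀ (sq_nonneg A₂) h1 (Real.rpow_pos_of_pos hφ₂ _) hφ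
      have h3 : (0:ℝ) ≤ (φ₁ - φ₂) ^ (N + 1) := Real.rpow_nonneg (by linarith) _
      nlinarith
    · rw [max_eq_left (by linarith : (0:ℝ) ≤ a - b)]
      have key := lich_radon (sub_pos.mpr h) hφ₂ (sub_pos.mpr hab) hb hN1
      rw [sub_add_cancel, sub_add_cancel] at key
      -- key : a^(N+1+1)/φ₁^(N+1) ≤ (a-b)^(N+1+1)/(φ₁-φ₂)^(N+1) + b^(N+1+1)/φ₂^(N+1)
      rw [show N + 1 + 1 = N + 2 by ring] at key
      have hD : 0 < (φ₁ - φ₂) ^ (N + 1) := Real.rpow_pos_of_pos (by linarith) _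
      have hkey := mul_le_mul_of_nonneg_left key hD.le
      rw [mul_add] at hkey
      have e : (φ₁ - φ₂) ^ (N + 1) * ((a - b) ^ (N + 2) / (φ₁ - φ₂) ^ (N + 1))
          = (a - b) ^ (N + 2) := by field_simp
      rw [e] at hkey
      rw [← haA, ← hbA, mul_sub]
      have eb : (φ₁ - φ₂) ^ (N + 1) * (b ^ (N + 2) / φ₂ ^ (N + 1))
          = (φ₁ - φ₂) ^ (N + 1) * b ^ (N + 2) / φ₂ ^ (N + 1) := by ring
      linarith [hkey, eb]
end

section
/- Let n ≥ 3 be an integer and set N := 2n/(n−2). Let (X, μ) be a measure space and let f, g : X → ℝ be measurable functions with f ≥ 0 and g ≥ 0. Then the L^(N/2+1)-seminorm of f^N − g^N is at most N times the product of the L^(N(N/2+1))-seminorm of f − g with the sum of the ((N−1)/N)-th powers of the L^(N/2+1)-seminorms of f^N and of g^N; that is, ‖f^N − g^N‖_{L^(N/2+1)} ≤ N · ‖f − g‖_{L^(N(N/2+1))} · (‖f^N‖_{L^(N/2+1)}^((N−1)/N) + ‖g^N‖_{L^(N/2+1)}^((N−1)/N)). -/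
open MeasureTheory

private lemma pow_diff_le {N a b : ℝ} (hN : 1 ≤ N) (hb : 0 ≤ b) (hab : b ≤ a) :
    a ^ N - b ^ N ≤ N * (a - b) * (a ^ (N - 1) + b ^ (N - 1)) := by
  rcases eq_or_lt_of_le hab with rfl | hlt
  · simp
  · have ha : 0 ≤ a := hb.trans hab
    obtain ⟨c, hc, hceq⟩ := exists_hasDerivAt_eq_slope (fun x : ℝ => x ^ N)
      (fun x : ℝ => N * x ^ (N - 1)) hlt
      (fun x _ => (Real.hasDerivAt_rpow_const (Or.inr hN)).continuousAt.continuousWithinAt)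
      (fun x _ => Real.hasDerivAt_rpow_const (Or.inr hN))
    have hc0 : 0 ≤ c := hb.trans hc.1.le
    have hcle : c ^ (N - 1) ≤ a ^ (N - 1) :=
      Real.rpow_le_rpow hc0 hc.2.le (by linarith)
    have heq : a ^ N - b ^ N = N * c ^ (N - 1) * (a - b) := by
      rw [hceq, div_mul_cancel₀ _ (sub_ne_zero.2 hlt.ne')]
    rw [heq]
    have hbn : 0 ≤ b ^ (N - 1) := Real.rpow_nonneg hb _
    have hN0 : (0:ℝ) ≤ N := by linarith
    nlinarith [mul_le_mul_of_nonneg_left (mul_le_mul_of_nonneg_left hcle hN0) (sub_nonneg.2 hab), mul_nonneg (mul_nonneg hN0 (sub_nonneg.2 hab)) hbn]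

private lemma abs_pow_diff_le {N a b : ℝ} (hN : 1 ≤ N) (ha : 0 ≤ a) (hb : 0 ≤ b) :
    |a ^ N - b ^ N| ≤ N * |a - b| * (a ^ (N - 1) + b ^ (N - 1)) := by
  rcases le_total b a with hab | hab
  · rw [abs_of_nonneg (sub_nonneg.2 (Real.rpow_le_rpow hb hab (by linarith))),
      abs_of_nonneg (sub_nonneg.2 hab)]
    exact pow_diff_le hN hb hab
  · rw [abs_sub_comm, abs_sub_comm a b,
      abs_of_nonneg (sub_nonneg.2 (Real.rpow_le_rpow ha hab (by linarith))),
      abs_of_nonneg (sub_nonneg.2 hab), add_comm (a ^ (N-1))]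
    exact pow_diff_le hN ha hab

/-- Claim 3' of the uniqueness proof: for nonnegative measurable `f, g` and
`N = 2n/(n-2)`,
`‖f^N − g^N‖_{L^(N/2+1)} ≤ N ‖f − g‖_{L^(N(N/2+1))}
    (‖f^N‖_{L^(N/2+1)}^((N-1)/N) + ‖g^N‖_{L^(N/2+1)}^((N-1)/N))`. -/
theorem lp_estimate_power_difference
    (n : ℕ) (hn : 3 ≤ n) (N : ℝ) (hN : N = 2 * (n : ℝ) / ((n : ℝ) - 2))
    {X : Type*} [MeasurableSpace X] (μ : Measure X)
    (f g : X → ℝ) (hfm : Measurable f) (hgm : Measurable g)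
    (hf : ∀ x, 0 ≤ f x) (hg : ∀ x, 0 ≤ g x) :
    eLpNorm (fun x => f x ^ N - g x ^ N) (ENNReal.ofReal (N / 2 + 1)) μ ≤
      ENNReal.ofReal N *
        eLpNorm (fun x => f x - g x) (ENNReal.ofReal (N * (N / 2 + 1))) μ *
        ((eLpNorm (fun x => f x ^ N) (ENNReal.ofReal (N / 2 + 1)) μ) ^ ((N - 1) / N) +
          (eLpNorm (fun x => g x ^ N) (ENNReal.ofReal (N / 2 + 1)) μ) ^ ((N - 1) / N)) := by
  have hn3 : (3:ℝ) ≤ (n:ℝ) := by exact_mod_cast hn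
  have hN2 : 2 < N := by
    rw [hN, lt_div_iff₀ (by linarith)]; linarith
  have hN1 : (1:ℝ) ≤ N := by linarith
  have hN0 : (0:ℝ) < N := by linarith
  set p : ℝ := N / 2 + 1 with hp
  have hp1 : 1 < p := by rw [hp]; linarith
  have hp0 : 0 < p := by linarith
  set q : ℝ := N * p / (N - 1) with hqdef
  have hq0 : 0 < q := div_pos (mul_pos hN0 hp0) (by linarith)
  have hq1 : 1 ≤ q := by
    rw [hqdef, le_div_iff₀ (by linarith)]; nlinarith
  set s : ℝ := (N - 1) / N with hs
  have hs0 : 0 < s := div_pos (by linarith) hN0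
  set F₁ : X → ℝ := fun x => f x - g x with hF₁
  set F₂ : X → ℝ := fun x => f x ^ (N - 1) + g x ^ (N - 1) with hF₂
  have hF₁m : AEStronglyMeasurable F₁ μ := (hfm.sub hgm).aestronglyMeasurable
  have hfpm : Measurable fun x => f x ^ (N - 1) := by fun_prop
  have hgpm : Measurable fun x => g x ^ (N - 1) := by fun_prop
  have hF₂m : AEStronglyMeasurable F₂ μ := (hfpm.add hgpm).aestronglyMeasurable
  -- Step 1: pointwise bound
  have step1 : eLpNorm (fun x => f x ^ N - g x ^ N) (ENNReal.ofReal p) μ ≤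
      eLpNorm ((N : ℝ) • (F₁ • F₂)) (ENNReal.ofReal p) μ := by
    refine eLpNorm_mono fun x => ?_
    have hF₂nn : 0 ≤ F₂ x := add_nonneg (Real.rpow_nonneg (hf x) _) (Real.rpow_nonneg (hg x) _)
    have key := abs_pow_diff_le (a := f x) (b := g x) hN1 (hf x) (hg x)
    rw [Real.norm_eq_abs, Real.norm_eq_abs,
      show ((N : ℝ) • (F₁ • F₂)) x = N * ((f x - g x) * F₂ x) from rfl,
      abs_mul, abs_mul, abs_of_nonneg hN0.le, abs_of_nonneg hF₂nn, ← mul_assoc]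
    exact key
  -- Step 2: pull out the constant
  have step2 : eLpNorm ((N : ℝ) • (F₁ • F₂)) (ENNReal.ofReal p) μ =
      ENNReal.ofReal N * eLpNorm (F₁ • F₂) (ENNReal.ofReal p) μ := by
    rw [eLpNorm_const_smul]
    congr 1
    rw [← ofReal_norm, Real.norm_eq_abs, abs_of_nonneg hN0.le]
  -- Step 3: Hölder
  have hpqr : 1 / ENNReal.ofReal p = 1 / ENNReal.ofReal (N * p) + 1 / ENNReal.ofReal q := by
    rw [one_div, one_div, one_div, ← ENNReal.ofReal_inv_of_pos hp0,
      ← ENNReal.ofReal_inv_of_pos (mul_pos hN0 hp0), ← ENNReal.ofReal_inv_of_pos hq0,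
      ← ENNReal.ofReal_add (by positivity) (by positivity)]
    have hNne : N ≠ 0 := ne_of_gt hN0
    have hpne : p ≠ 0 := ne_of_gt hp0
    have h1 : N - 1 ≠ 0 := by linarith
    congr 1
    rw [hqdef, inv_div, inv_eq_one_div (N * p), ← add_div,
      show (1:ℝ) + (N - 1) = N by ring, div_mul_cancel_left₀ hNne]
  have step3 : eLpNorm (F₁ • F₂) (ENNReal.ofReal p) μ ≤
      eLpNorm F₁ (ENNReal.ofReal (N * p)) μ * eLpNorm F₂ (ENNReal.ofReal q) μ :=
    eLpNorm_smul_le_mul_eLpNorm (hpqr := ⟨by simpa only [one_div] using hpqr.symm⟩) hF₂m hF₁m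
  -- Step 4: triangle inequality
  have step4 : eLpNorm F₂ (ENNReal.ofReal q) μ ≤
      eLpNorm (fun x => f x ^ (N - 1)) (ENNReal.ofReal q) μ +
      eLpNorm (fun x => g x ^ (N - 1)) (ENNReal.ofReal q) μ :=
    eLpNorm_add_le hfpm.aestronglyMeasurable hgpm.aestronglyMeasurable
      (ENNReal.one_le_ofReal.2 hq1)
  -- Step 5: power identity
  have hqs : ENNReal.ofReal q * ENNReal.ofReal s = ENNReal.ofReal p := by
    rw [← ENNReal.ofReal_mul hq0.le]
    have hNne : N ≠ 0 := ne_of_gt hN0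
    have h1 : N - 1 ≠ 0 := by linarith
    congr 1
    rw [hqdef, hs, div_mul_div_comm, mul_comm (N * p) (N - 1), mul_div_mul_left _ _ h1,
      mul_div_cancel_left₀ _ hNne]
  have step5 : ∀ (h : X → ℝ), (∀ x, 0 ≤ h x) →
      eLpNorm (fun x => h x ^ (N - 1)) (ENNReal.ofReal q) μ =
      (eLpNorm (fun x => h x ^ N) (ENNReal.ofReal p) μ) ^ s := by
    intro h hh
    have : (fun x => h x ^ (N - 1)) = fun x => ‖h x ^ N‖ ^ s := by
      funext x
      rw [Real.norm_eq_abs, abs_of_nonneg (Real.rpow_nonneg (hh x) _),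
        ← Real.rpow_mul (hh x)]
      congr 1
      rw [hs]
      field_simp
    rw [this, eLpNorm_norm_rpow _ hs0, hqs]
  calc eLpNorm (fun x => f x ^ N - g x ^ N) (ENNReal.ofReal p) μ
      ≤ eLpNorm ((N : ℝ) • (F₁ • F₂)) (ENNReal.ofReal p) μ := step1
    _ = ENNReal.ofReal N * eLpNorm (F₁ • F₂) (ENNReal.ofReal p) μ := step2
    _ ≤ ENNReal.ofReal N *
        (eLpNorm F₁ (ENNReal.ofReal (N * p)) μ * eLpNorm F₂ (ENNReal.ofReal q) μ) :=
      mul_le_mul_right step3 _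
    _ ≤ ENNReal.ofReal N * (eLpNorm F₁ (ENNReal.ofReal (N * p)) μ *
        ((eLpNorm (fun x => f x ^ N) (ENNReal.ofReal p) μ) ^ s +
          (eLpNorm (fun x => g x ^ N) (ENNReal.ofReal p) μ) ^ s)) := by
      rw [← step5 f hf, ← step5 g hg]
      exact mul_le_mul_right (mul_le_mul_right step4 _) _
    _ = ENNReal.ofReal N * eLpNorm F₁ (ENNReal.ofReal (N * p)) μ *
        ((eLpNorm (fun x => f x ^ N) (ENNReal.ofReal p) μ) ^ s +
          (eLpNorm (fun x => g x ^ N) (ENNReal.ofReal p) μ) ^ s) := by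
      rw [mul_assoc]
end
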